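/- Let H be a real Hilbert space, Ω ⊆ H open, F : Ω → H continuously Fréchet differentiable, T : H ⇉ H a maximal monotone set-valued operator, and x* ∈ Ω with 0 ∈ F(x*) + T(x*). Suppose F'(x*) is a positive-semidefinite bounded linear operator and F̂'(x*) := (F'(x*) + F'(x*)*)/2 has a bounded linear inverse. Let R > 0, κ := sup{t ∈ [0, R) : B(x*, t) ⊂ Ω}, and let f : [0, R) → ℝ be twice continuously differentiable with f(0) = 0, f'(0) = −1, f' convex and strictly increasing, satisfying ‖F̂'(x*)⁻¹‖ · ‖F'(x) − F'(x* + τ(x − x*))‖ ≤ f'(‖x − x*‖) − f'(τ‖x − x*‖) for all τ ∈ [0, 1], x ∈ B(x*, κ). Set ν := sup{t ∈ [0, R) : f'(t) < 0}, ρ := sup{t ∈ (0, ν) : f(t)/(t f'(t)) − 1 < 1}, r := min{κ, ρ}. Then for any sequence {x_k} with x₀ ∈ B(x*, r) \ {x*} satisfying the Newton inclusion 0 ∈ F(x_k) + F'(x_k)(x_{k+1} − x_k) + T(x_{k+1}) for all k ≥ 0, the whole sequence {x_k} is contained in B(x*, r) and converges to x*. -/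

import Mathlib

open RealInnerProductSpace Filter Metric Set
open Topology

/-- A set-valued operator `T : H ⇉ H` is monotone if `⟨u - v, y - x⟩ ≥ 0` whenever
`u ∈ T y` and `v ∈ T x`; it is maximal monotone if moreover every pair `(x, u)` that is
monotonically related to the graph of `T` belongs to the graph of `T`. -/
def IsMaximalMonotone {H : Type*} [NormedAddCommGroup H] [InnerProductSpace ℝ H]
    (T : H → Set H) : Prop :=
  (∀ x y u v : H, u ∈ T y → v ∈ T x → 0 ≤ ⟪u - v, y - x⟫) ∧
  (∀ x u : H, (∀ y v : H, v ∈ T y → 0 ≤ ⟪u - v, x - y⟫) → u ∈ T x)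



lemma coercive_aux {H : Type*} [NormedAddCommGroup H] [InnerProductSpace ℝ H] [CompleteSpace H]
    (A : H →L[ℝ] H) (hpsd : ∀ y : H, 0 ≤ ⟪A y, y⟫)
    (Ahat : H →L[ℝ] H)
    (hAhat : Ahat = (1 / 2 : ℝ) • (A + ContinuousLinearMap.adjoint A))
    (Ginv : H →L[ℝ] H)
    (hGinv2 : Ahat.comp Ginv = ContinuousLinearMap.id ℝ H) :
    ∀ z : H, ‖z‖ ^ 2 ≤ ‖Ginv‖ * ⟪A z, z⟫ := by
  have hq : ∀ u : H, ⟪Ahat u, u⟫ = ⟪A u, u⟫ := by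
    intro u
    simp [hAhat, ContinuousLinearMap.smul_apply, ContinuousLinearMap.add_apply,
      inner_smul_left, inner_add_left, ContinuousLinearMap.adjoint_inner_left,
      real_inner_comm u (A u)]
    ring
  have hsym : ∀ u v : H, ⟪Ahat u, v⟫ = ⟪u, Ahat v⟫ := by
    intro u v
    simp [hAhat, ContinuousLinearMap.smul_apply, ContinuousLinearMap.add_apply,
      inner_smul_left, inner_smul_right, inner_add_left, inner_add_right,
      ContinuousLinearMap.adjoint_inner_left, ContinuousLinearMap.adjoint_inner_right]
    ring
  have hCS : ∀ u v : H, ⟪Ahat u, v⟫ ^ 2 ≤ ⟪Ahat u, u⟫ * ⟪Ahat v, v⟫ := by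
    intro u v
    have key : ∀ t : ℝ, 0 ≤ ⟪Ahat v, v⟫ * (t * t) + (2 * ⟪Ahat u, v⟫) * t + ⟪Ahat u, u⟫ := by
      intro t
      have h0 : (0:ℝ) ≤ ⟪Ahat (u + t • v), u + t • v⟫ := by rw [hq]; exact hpsd _
      have : ⟪Ahat (u + t • v), u + t • v⟫
          = ⟪Ahat v, v⟫ * (t * t) + (2 * ⟪Ahat u, v⟫) * t + ⟪Ahat u, u⟫ := by
        simp only [map_add, map_smul, inner_add_left, inner_add_right,
          inner_smul_left, inner_smul_right, ContinuousLinearMap.coe_smul',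
          Pi.smul_apply]
        have hvu : ⟪Ahat v, u⟫ = ⟪Ahat u, v⟫ :=
          (hsym v u).trans (real_inner_comm v (Ahat u)).symm
        rw [hvu]
        simp only [starRingEnd_apply, star_trivial]
        ring
      linarith [this ▸ h0]
    have := discrim_le_zero key
    rw [discrim] at this
    nlinarith [this]
  intro z
  have hz1 : Ahat (Ginv z) = z := by
    have := congrArg (fun (L : H →L[ℝ] H) => L z) hGinv2
    simpa using this
  have h1 : ⟪Ahat (Ginv z), z⟫ = ‖z‖ ^ 2 := by
    rw [hz1, real_inner_self_eq_norm_sq]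
  have h2 : ⟪Ahat (Ginv z), Ginv z⟫ ≤ ‖Ginv‖ * ‖z‖ ^ 2 := by
    calc ⟪Ahat (Ginv z), Ginv z⟫ = ⟪z, Ginv z⟫ := by rw [hz1]
    _ ≤ ‖z‖ * ‖Ginv z‖ := real_inner_le_norm _ _
    _ ≤ ‖z‖ * (‖Ginv‖ * ‖z‖) := by
        gcongr; exact Ginv.le_opNorm z
    _ = ‖Ginv‖ * ‖z‖ ^ 2 := by ring
  have h3 := hCS (Ginv z) z
  rw [h1, hq z] at h3
  have h4 : (0:ℝ) ≤ ⟪Ahat (Ginv z), Ginv z⟫ := by rw [hq]; exact hpsd _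
  rcases eq_or_ne z 0 with rfl | hz
  · simp
  · have hzn : 0 < ‖z‖ := norm_pos_iff.2 hz
    nlinarith [mul_le_mul_of_nonneg_right h2 (hpsd z), mul_pos hzn hzn, hpsd z, h3, h4]


section scalar
variable {R : ℝ} {f f' f'' : ℝ → ℝ}

lemma my_ftc (hfd1 : ∀ t ∈ Set.Ico (0:ℝ) R, HasDerivWithinAt f (f' t) (Set.Ico (0:ℝ) R) t)
    (hfd2 : ∀ t ∈ Set.Ico (0:ℝ) R, HasDerivWithinAt f' (f'' t) (Set.Ico (0:ℝ) R) t)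
    {a b : ℝ} (h0a : 0 ≤ a) (hab : a ≤ b) (hbR : b < R) :
    ∫ s in a..b, f' s = f b - f a := by
  have hsub : Icc a b ⊆ Ico (0:ℝ) R := fun x hx => ⟨h0a.trans hx.1, lt_of_le_of_lt hx.2 hbR⟩
  have hcf : ContinuousOn f (Icc a b) :=
    fun x hx => ((hfd1 x (hsub hx)).continuousWithinAt).mono hsub
  have hcf' : ContinuousOn f' (Icc a b) :=
    fun x hx => ((hfd2 x (hsub hx)).continuousWithinAt).mono hsub
  refine intervalIntegral.integral_eq_sub_of_hasDeriv_right_of_le hab hcf ?_ ?_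
  · intro x hx
    have hx0 : 0 < x := lt_of_le_of_lt h0a hx.1
    have hxR : x < R := lt_trans hx.2 hbR
    exact ((hfd1 x ⟨hx0.le, hxR⟩).hasDerivAt
      (Ico_mem_nhds hx0 hxR)).hasDerivWithinAt
  · exact (hcf'.mono (by rw [uIcc_of_le hab])).intervalIntegrable

lemma my_mean_ub (hfd1 : ∀ t ∈ Set.Ico (0:ℝ) R, HasDerivWithinAt f (f' t) (Set.Ico (0:ℝ) R) t)
    (hfd2 : ∀ t ∈ Set.Ico (0:ℝ) R, HasDerivWithinAt f' (f'' t) (Set.Ico (0:ℝ) R) t)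
    (hfmono : StrictMonoOn f' (Set.Ico (0:ℝ) R))
    {a b : ℝ} (h0a : 0 ≤ a) (hab : a ≤ b) (hbR : b < R) :
    (b - a) * f' a ≤ f b - f a ∧ f b - f a ≤ (b - a) * f' b := by
  have hsub : Icc a b ⊆ Ico (0:ℝ) R := fun x hx => ⟨h0a.trans hx.1, lt_of_le_of_lt hx.2 hbR⟩
  have hcf' : ContinuousOn f' (Icc a b) :=
    fun x hx => ((hfd2 x (hsub hx)).continuousWithinAt).mono hsub
  have hint : IntervalIntegrable f' MeasureTheory.volume a b :=
    (hcf'.mono (by rw [uIcc_of_le hab])).intervalIntegrable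
  rw [← my_ftc hfd1 hfd2 h0a hab hbR]
  have hmem : ∀ x ∈ Icc a b, x ∈ Ico (0:ℝ) R := fun x hx => hsub hx
  have hma : a ∈ Ico (0:ℝ) R := hsub ⟨le_refl a, hab⟩
  have hmb : b ∈ Ico (0:ℝ) R := hsub ⟨hab, le_refl b⟩
  constructor
  · have h1 := intervalIntegral.integral_mono_on hab intervalIntegrable_const hint
      (fun x hx => hfmono.monotoneOn hma (hmem x hx) hx.1)
    simpa [smul_eq_mul, mul_comm] using h1
  · have h1 := intervalIntegral.integral_mono_on hab hint intervalIntegrable_const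
      (fun x hx => hfmono.monotoneOn (hmem x hx) hmb hx.2)
    simpa [smul_eq_mul, mul_comm] using h1

lemma my_conv_ineq (hR : 0 < R)
    (hfd2 : ∀ t ∈ Set.Ico (0:ℝ) R, HasDerivWithinAt f' (f'' t) (Set.Ico (0:ℝ) R) t)
    (hf'0 : f' 0 = -1)
    (hfconv : ConvexOn ℝ (Set.Ico (0:ℝ) R) f')
    {t : ℝ} (ht0 : 0 < t) (htR : t < R) :
    f' t + 1 ≤ t * f'' t := by
  have hmem : t ∈ Ico (0:ℝ) R := ⟨ht0.le, htR⟩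
  have hd := hfd2 t hmem
  rw [hasDerivWithinAt_iff_tendsto_slope] at hd
  have hsub : Ioo t R ⊆ Ico (0:ℝ) R \ {t} :=
    fun y hy => ⟨⟨(ht0.trans hy.1).le, hy.2⟩, ne_of_gt hy.1⟩
  have hle : 𝓝[Ioo t R] t ≤ 𝓝[Ico (0:ℝ) R \ {t}] t := nhdsWithin_mono t hsub
  have hten : Tendsto (slope f' t) (𝓝[Ioo t R] t) (𝓝 (f'' t)) := hd.mono_left hle
  have hne : (𝓝[Ioo t R] t).NeBot := by
    rw [nhdsWithin_Ioo_eq_nhdsGT htR]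
    infer_instance
  have hev : ∀ᶠ y in 𝓝[Ioo t R] t, (f' t - f' 0) / (t - 0) ≤ slope f' t y := by
    filter_upwards [self_mem_nhdsWithin] with y hy
    have := hfconv.slope_mono_adjacent (⟨le_refl (0:ℝ), hR⟩ : (0:ℝ) ∈ Ico (0:ℝ) R)
      (⟨(ht0.trans hy.1).le, hy.2⟩ : y ∈ Ico (0:ℝ) R) ht0 hy.1
    rw [slope_def_field]
    rw [div_le_div_iff₀ (by linarith) (by linarith [hy.1])] at this ⊢
    nlinarith [this]
  have hlim := ge_of_tendsto hten hev
  rw [hf'0, sub_zero] at hlim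
  rw [div_le_iff₀ ht0] at hlim
  linarith [hlim]

lemma my_psi_mono (hR : 0 < R)
    (hfd1 : ∀ t ∈ Set.Ico (0:ℝ) R, HasDerivWithinAt f (f' t) (Set.Ico (0:ℝ) R) t)
    (hfd2 : ∀ t ∈ Set.Ico (0:ℝ) R, HasDerivWithinAt f' (f'' t) (Set.Ico (0:ℝ) R) t)
    (hf0 : f 0 = 0) (hf'0 : f' 0 = -1)
    (hfconv : ConvexOn ℝ (Set.Ico (0:ℝ) R) f')
    (hfmono : StrictMonoOn f' (Set.Ico (0:ℝ) R))
    {s t : ℝ} (hs0 : 0 < s) (hst : s ≤ t) (htR : t < R)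
    (hneg : ∀ u, 0 ≤ u → u ≤ t → f' u < 0) :
    (s * f' s - f s) * (t * (-f' t)) ≤ (t * f' t - f t) * (s * (-f' s)) := by
  set C1 : ℝ := s * (-f' s) with hC1
  set C2 : ℝ := s * f' s - f s with hC2
  set ψ : ℝ → ℝ := fun u => (u * f' u - f u) * C1 + C2 * (u * f' u) with hψ
  -- facts at s
  have hsR : s < R := lt_of_le_of_lt hst htR
  have hmean := my_mean_ub hfd1 hfd2 hfmono (le_refl (0:ℝ)) hs0.le hsR
  rw [hf0] at hmean
  have hfs_low : -s ≤ f s := by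
    have := hmean.1; rw [hf'0] at this; linarith
  have hC2nn : 0 ≤ C2 := by have := hmean.2; simp only [hC2]; linarith
  have hC1nn : 0 ≤ C1 := by
    have := hneg s hs0.le hst
    simp only [hC1]; nlinarith
  -- monotonicity of ψ on [s, t]
  have hmono : MonotoneOn ψ (Icc s t) := by
    apply monotoneOn_of_hasDerivWithinAt_nonneg (convex_Icc s t)
      (f' := fun u => u * f'' u * C1 + C2 * (f' u + u * f'' u))
    · intro x hx
      have hxm : x ∈ Ico (0:ℝ) R :=
        ⟨(hs0.le).trans hx.1, lt_of_le_of_lt hx.2 htR⟩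
      have h1 : HasDerivAt f (f' x) x :=
        (hfd1 x hxm).hasDerivAt (Ico_mem_nhds (hs0.trans_le hx.1) hxm.2)
      have h2 : HasDerivAt f' (f'' x) x :=
        (hfd2 x hxm).hasDerivAt (Ico_mem_nhds (hs0.trans_le hx.1) hxm.2)
      exact ((((continuousAt_id.mul h2.continuousAt).sub h1.continuousAt).mul
        continuousAt_const).add
        (continuousAt_const.mul (continuousAt_id.mul h2.continuousAt))).continuousWithinAt
    · intro x hx
      rw [interior_Icc] at hx
      have hxm : x ∈ Ico (0:ℝ) R :=
        ⟨(hs0.le).trans hx.1.le, lt_of_lt_of_le hx.2 htR.le⟩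
      have hx0 : 0 < x := hs0.trans hx.1
      have h1 : HasDerivAt f (f' x) x := (hfd1 x hxm).hasDerivAt (Ico_mem_nhds hx0 hxm.2)
      have h2 : HasDerivAt f' (f'' x) x := (hfd2 x hxm).hasDerivAt (Ico_mem_nhds hx0 hxm.2)
      have h3 : HasDerivAt (fun u => u * f' u) (1 * f' x + x * f'' x) x :=
        (hasDerivAt_id x).mul h2
      have h4 : HasDerivAt (fun u => (u * f' u - f u) * C1 + C2 * (u * f' u))
          ((1 * f' x + x * f'' x - f' x) * C1 + C2 * (1 * f' x + x * f'' x)) x :=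
        ((h3.sub h1).mul_const C1).add (h3.const_mul C2)
      have : (1 * f' x + x * f'' x - f' x) * C1 + C2 * (1 * f' x + x * f'' x)
          = x * f'' x * C1 + C2 * (f' x + x * f'' x) := by ring
      rw [this] at h4
      exact h4.hasDerivWithinAt
    · intro x hx
      rw [interior_Icc] at hx
      have hx0 : 0 < x := hs0.trans hx.1
      have hxR : x < R := lt_of_lt_of_le hx.2 htR.le
      have hconv := my_conv_ineq hR hfd2 hf'0 hfconv hx0 hxR
      have hxneg : f' x < 0 := hneg x hx0.le hx.2.le
      have hsx : f' s ≤ f' x := hfmono.monotoneOn ⟨hs0.le, hsR⟩ ⟨hx0.le, hxR⟩ hx.1.le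
      have hx1 : -1 ≤ f' x := by
        have := hfmono.monotoneOn (⟨le_refl (0:ℝ), hR⟩ : (0:ℝ) ∈ Ico (0:ℝ) R)
          ⟨hx0.le, hxR⟩ hx0.le
        rw [hf'0] at this; linarith
      -- ψ' x = x f'' x (C1 + C2) + C2 f' x = x f'' x (-f s) + C2 f' x
      have hkey : 0 ≤ x * f'' x * C1 + C2 * (f' x + x * f'' x) := by
        have e1 : x * f'' x * C1 + C2 * (f' x + x * f'' x)
            = x * f'' x * (-(f s)) + C2 * f' x := by simp only [hC1, hC2]; ring
        rw [e1]
        have hxf : f' x + 1 ≤ x * f'' x := hconv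
        have hfs_up : -(f s) ≥ s * (-f' s) := by simp only [hC2] at hC2nn; nlinarith
        have hC2ub : C2 ≤ s * (f' s + 1) := by simp only [hC2]; nlinarith [hfs_low]
        nlinarith [mul_nonneg hC1nn (by linarith : (0:ℝ) ≤ f' x + 1),
          mul_le_mul_of_nonpos_right hC2ub (le_of_lt hxneg),
          mul_le_mul_of_nonneg_right hxf (by nlinarith : (0:ℝ) ≤ -(f s)),
          mul_nonneg hs0.le (sub_nonneg.2 hsx)]
      exact hkey
  have hpsi := hmono (left_mem_Icc.2 hst) (right_mem_Icc.2 hst) hst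
  have hψs : ψ s = 0 := by simp only [hψ, hC1, hC2]; ring
  rw [hψs] at hpsi
  simp only [hψ] at hpsi
  nlinarith [hpsi]
end scalar


lemma rem_bound {H : Type*} [NormedAddCommGroup H] [InnerProductSpace ℝ H] [CompleteSpace H]
    (Ω : Set H) (F : H → H) (F' : H → H →L[ℝ] H)
    (hFd : ∀ y ∈ Ω, HasFDerivAt F (F' y) y) (hF'c : ContinuousOn F' Ω)
    (xs x : H) (hseg : ∀ τ ∈ Icc (0:ℝ) 1, xs + τ • (x - xs) ∈ Ω)
    (G : ℝ) (hG : 0 ≤ G) (b : ℝ → ℝ) (hbc : ContinuousOn b (Icc 0 1))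
    (hbound : ∀ τ ∈ Icc (0:ℝ) 1, G * ‖F' x - F' (xs + τ • (x - xs))‖ ≤ b τ) :
    G * ‖F xs - F x - (F' x) (xs - x)‖ ≤ ∫ τ in (0:ℝ)..1, b τ * ‖x - xs‖ := by
  set u := x - xs with hu
  set γ : ℝ → H := fun τ => xs + τ • u with hγ
  set v : ℝ → H := fun τ => F' (γ τ) u - F' x u with hv
  have hγcont : Continuous γ := by
    apply Continuous.add continuous_const
    exact continuous_id.smul continuous_const
  have hγmem : ∀ τ ∈ Icc (0:ℝ) 1, γ τ ∈ Ω := hseg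
  have hvcont : ContinuousOn v (Icc (0:ℝ) 1) := by
    apply ContinuousOn.sub _ continuousOn_const
    have h1 : ContinuousOn (fun τ => F' (γ τ)) (Icc (0:ℝ) 1) :=
      hF'c.comp hγcont.continuousOn hγmem
    exact h1.clm_apply continuousOn_const
  have hvint : IntervalIntegrable v MeasureTheory.volume 0 1 :=
    (hvcont.mono (by rw [uIcc_of_le (by norm_num : (0:ℝ) ≤ 1)])).intervalIntegrable
  have hderiv : ∀ τ ∈ uIcc (0:ℝ) 1, HasDerivAt (fun σ => F (γ σ) - σ • (F' x u)) (v τ) τ := by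
    intro τ hτ
    rw [uIcc_of_le (by norm_num : (0:ℝ) ≤ 1)] at hτ
    have hγd : HasDerivAt γ u τ := by
      show HasDerivAt (fun τ => xs + τ • u) u τ
      simpa using ((hasDerivAt_id τ).smul_const u).const_add xs
    have hFγ : HasDerivAt (fun σ => F (γ σ)) (F' (γ τ) u) τ :=
      (hFd (γ τ) (hγmem τ hτ)).comp_hasDerivAt τ hγd
    have h := hFγ.sub ((hasDerivAt_id τ).smul_const (F' x u))
    simp only [one_smul] at h
    exact h
  have hFTC := intervalIntegral.integral_eq_sub_of_hasDerivAt hderiv hvint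
  have hval : ∫ τ in (0:ℝ)..1, v τ = F x - F xs - F' x u := by
    rw [hFTC]
    have : xs + u = x := by rw [hu]; abel
    simp [hγ, this]
    abel
  have hRem : F xs - F x - (F' x) (xs - x) = -(∫ τ in (0:ℝ)..1, v τ) := by
    rw [hval]
    have : (F' x) (xs - x) = -(F' x u) := by rw [hu, ← map_neg]; congr 1; abel
    rw [this]; abel
  rw [hRem, norm_neg]
  have h1 : G * ‖∫ τ in (0:ℝ)..1, v τ‖ ≤ G * ∫ τ in (0:ℝ)..1, ‖v τ‖ := by
    gcongr
    exact intervalIntegral.norm_integral_le_integral_norm (by norm_num)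
  have h2 : G * (∫ τ in (0:ℝ)..1, ‖v τ‖) = ∫ τ in (0:ℝ)..1, G * ‖v τ‖ := by
    rw [← intervalIntegral.integral_const_mul]
  have h3 : (∫ τ in (0:ℝ)..1, G * ‖v τ‖) ≤ ∫ τ in (0:ℝ)..1, b τ * ‖u‖ := by
    apply intervalIntegral.integral_mono_on (by norm_num)
    · exact (((hvcont.norm).const_smul G).mono
        (by rw [uIcc_of_le (by norm_num : (0:ℝ) ≤ 1)])).intervalIntegrable
    · exact ((hbc.mul continuousOn_const).mono
        (by rw [uIcc_of_le (by norm_num : (0:ℝ) ≤ 1)])).intervalIntegrable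
    · intro τ hτ
      have hb := hbound τ hτ
      have hvle : ‖v τ‖ ≤ ‖F' x - F' (γ τ)‖ * ‖u‖ := by
        have : v τ = -((F' x - F' (γ τ)) u) := by
          simp [hv, ContinuousLinearMap.sub_apply]
        rw [this, norm_neg]
        exact (F' x - F' (γ τ)).le_opNorm u
      calc G * ‖v τ‖ ≤ G * (‖F' x - F' (γ τ)‖ * ‖u‖) := by gcongr
        _ = (G * ‖F' x - F' (γ τ)‖) * ‖u‖ := by ring
        _ ≤ b τ * ‖u‖ := by
            apply mul_le_mul_of_nonneg_right _ (norm_nonneg u)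
            exact hb
  calc G * ‖∫ τ in (0:ℝ)..1, v τ‖ ≤ G * ∫ τ in (0:ℝ)..1, ‖v τ‖ := h1
    _ = ∫ τ in (0:ℝ)..1, G * ‖v τ‖ := h2
    _ ≤ ∫ τ in (0:ℝ)..1, b τ * ‖u‖ := h3


set_option maxHeartbeats 2000000 in
theorem newton_sequence_converges {H : Type*} [NormedAddCommGroup H] [InnerProductSpace ℝ H] [CompleteSpace H]
    (Ω : Set H) (hΩ : IsOpen Ω) (F : H → H) (F' : H → H →L[ℝ] H)
    (hFd : ∀ x ∈ Ω, HasFDerivAt F (F' x) x) (hF'c : ContinuousOn F' Ω)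
    (xs : H) (hxs : xs ∈ Ω)
    (T : H → Set H) (hT : IsMaximalMonotone T)
    (hsol : (0 : H) ∈ (fun w => F xs + w) '' T xs)
    (hpsd : ∀ y : H, 0 ≤ ⟪(F' xs) y, y⟫)
    (Ahat : H →L[ℝ] H)
    (hAhat : Ahat = (1 / 2 : ℝ) • (F' xs + ContinuousLinearMap.adjoint (F' xs)))
    (Ginv : H →L[ℝ] H)
    (hGinv1 : Ginv.comp Ahat = ContinuousLinearMap.id ℝ H)
    (hGinv2 : Ahat.comp Ginv = ContinuousLinearMap.id ℝ H)
    (R : ℝ) (hR : 0 < R) (κ : ℝ)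
    (hκ : κ = sSup {u : ℝ | u ∈ Set.Ico (0 : ℝ) R ∧ Metric.ball xs u ⊆ Ω})
    (f f' f'' : ℝ → ℝ)
    (hfd1 : ∀ t ∈ Set.Ico (0 : ℝ) R, HasDerivWithinAt f (f' t) (Set.Ico (0 : ℝ) R) t)
    (hfd2 : ∀ t ∈ Set.Ico (0 : ℝ) R, HasDerivWithinAt f' (f'' t) (Set.Ico (0 : ℝ) R) t)
    (hfc : ContinuousOn f'' (Set.Ico (0 : ℝ) R))
    (hf0 : f 0 = 0) (hf'0 : f' 0 = -1)
    (hfconv : ConvexOn ℝ (Set.Ico (0 : ℝ) R) f')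
    (hfmono : StrictMonoOn f' (Set.Ico (0 : ℝ) R))
    (hmaj : ∀ τ ∈ Set.Icc (0 : ℝ) 1, ∀ x ∈ Metric.ball xs κ,
      ‖Ginv‖ * ‖F' x - F' (xs + τ • (x - xs))‖ ≤ f' ‖x - xs‖ - f' (τ * ‖x - xs‖))
    (ν : ℝ) (hν : ν = sSup {u : ℝ | u ∈ Set.Ico (0 : ℝ) R ∧ f' u < 0})
    (ρ : ℝ) (hρ : ρ = sSup {u : ℝ | u ∈ Set.Ioo (0 : ℝ) ν ∧ f u / (u * f' u) - 1 < 1})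
    (r : ℝ) (hr : r = min κ ρ)
    (xseq : ℕ → H) (hx0 : xseq 0 ∈ Metric.ball xs r) (hx0ne : xseq 0 ≠ xs)
    (hNewton : ∀ k : ℕ, (0 : H) ∈
      (fun w => F (xseq k) + (F' (xseq k)) (xseq (k + 1) - xseq k) + w) '' T (xseq (k + 1)))
    :
    (∀ k : ℕ, xseq k ∈ Metric.ball xs r) ∧
      Filter.Tendsto xseq Filter.atTop (nhds xs) := by
  -- basic facts about the sups
  have hcontf' : ContinuousOn f' (Set.Ico (0:ℝ) R) :=
    fun u hu => (hfd2 u hu).continuousWithinAt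
  have hKne : {u : ℝ | u ∈ Set.Ico (0 : ℝ) R ∧ Metric.ball xs u ⊆ Ω}.Nonempty :=
    ⟨0, ⟨le_refl 0, hR⟩, by simp⟩
  have hballκ : Metric.ball xs κ ⊆ Ω := by
    intro y hy
    rw [Metric.mem_ball, hκ] at hy
    obtain ⟨u, huK, hu⟩ := exists_lt_of_lt_csSup hKne hy
    exact huK.2 (Metric.mem_ball.2 hu)
  have hν0 : 0 ≤ ν := hν ▸ Real.sSup_nonneg (fun u hu => hu.1.1)
  have hνR : ν ≤ R := hν ▸ Real.sSup_le (fun u hu => hu.1.2.le) hR.le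
  have hf'neg : ∀ u : ℝ, 0 ≤ u → u < ν → f' u < 0 := by
    intro u hu0 huν
    have hNne : {u : ℝ | u ∈ Set.Ico (0 : ℝ) R ∧ f' u < 0}.Nonempty := by
      by_contra hne
      rw [Set.not_nonempty_iff_eq_empty] at hne
      rw [hν, hne, Real.sSup_empty] at huν
      linarith
    obtain ⟨s', hs'N, hus'⟩ := exists_lt_of_lt_csSup hNne (hν ▸ huν)
    calc f' u < f' s' := hfmono ⟨hu0, lt_trans hus' hs'N.1.2⟩ hs'N.1 hus'
      _ < 0 := hs'N.2
  have hρν : ρ ≤ ν := hρ ▸ Real.sSup_le (fun u hu => hu.1.2.le) hν0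
  have hrκ : r ≤ κ := hr ▸ min_le_left _ _
  have hrρ : r ≤ ρ := hr ▸ min_le_right _ _
  -- facts about t0
  set t0 : ℝ := ‖xseq 0 - xs‖ with ht0
  have ht0pos : 0 < t0 := by
    rw [ht0, norm_pos_iff, sub_ne_zero]; exact hx0ne
  have ht0r : t0 < r := by
    rw [ht0, ← dist_eq_norm]; exact Metric.mem_ball.1 hx0
  have ht0ν : t0 < ν := lt_of_lt_of_le (lt_of_lt_of_le ht0r hrρ) hρν
  have ht0R : t0 < R := lt_of_lt_of_le ht0ν hνR
  -- solution inclusion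
  obtain ⟨w0, hw0T, hw0eq⟩ := hsol
  have hw0' : -F xs ∈ T xs := by
    have h := hw0eq
    simp only at h
    rwa [← add_eq_zero_iff_neg_eq.1 h] at hw0T
  -- key one-step estimate
  have hstep : ∀ x xp : H, ‖x - xs‖ ≤ t0 →
      ((0:H) ∈ (fun w => F x + (F' x) (xp - x) + w) '' T xp) →
      ‖xp - xs‖ * (-f' ‖x - xs‖) ≤ ‖x - xs‖ * f' ‖x - xs‖ - f ‖x - xs‖ := by
    intro x xp hxt0 hinc
    set t : ℝ := ‖x - xs‖ with htdef
    have ht0' : 0 ≤ t := norm_nonneg _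
    have htν : t < ν := lt_of_le_of_lt hxt0 ht0ν
    have htR : t < R := lt_of_lt_of_le htν hνR
    have htκ : t < κ := lt_of_le_of_lt hxt0 (lt_of_lt_of_le ht0r hrκ)
    have hxball : x ∈ Metric.ball xs κ := by
      rw [Metric.mem_ball, dist_eq_norm]; exact htκ
    have hfnt : f' t < 0 := hf'neg t ht0' htν
    have hmub := my_mean_ub hfd1 hfd2 hfmono (le_refl (0:ℝ)) ht0' htR
    rw [hf0] at hmub
    have hhtnn : 0 ≤ t * f' t - f t := by linarith [hmub.2]
    -- extract w from the Newton inclusion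
    obtain ⟨w, hwT, hweq⟩ := hinc
    simp only at hweq
    set e : H := xp - xs with hedef
    -- monotonicity of T
    have hmonoT := hT.1 xs xp w (-F xs) hwT hw0'
    have hwval : w - -F xs = F xs - F x - (F' x) (xp - x) := by
      have h2 : w = -(F x + (F' x) (xp - x)) :=
        (add_eq_zero_iff_neg_eq.1 hweq).symm
      rw [h2]; abel
    rw [hwval] at hmonoT
    rw [← hedef] at hmonoT
    -- coercivity
    have hcoer := coercive_aux (F' xs) hpsd Ahat hAhat Ginv hGinv2 e
    -- algebraic identity
    set Rem : H := F xs - F x - (F' x) (xs - x) with hRemdef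
    have hid : (F' xs) e + (F xs - F x - (F' x) (xp - x)) = Rem + ((F' xs) e - (F' x) e) := by
      have h1 : (F' x) (xp - x) = (F' x) e + (F' x) (xs - x) := by
        rw [← map_add]; congr 1; rw [hedef]; abel
      rw [h1, hRemdef]; abel
    -- inner product chain
    have hchain : ⟪(F' xs) e, e⟫ ≤ ‖Rem‖ * ‖e‖ + ‖F' x - F' xs‖ * (‖e‖ * ‖e‖) := by
      have h2 : ⟪(F' xs) e, e⟫ ≤ ⟪(F' xs) e + (F xs - F x - (F' x) (xp - x)), e⟫ := by
        rw [inner_add_left]; linarith [hmonoT]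
      rw [hid, inner_add_left] at h2
      have h3 : ⟪Rem, e⟫ ≤ ‖Rem‖ * ‖e‖ := real_inner_le_norm _ _
      have h4 : ⟪(F' xs) e - (F' x) e, e⟫ ≤ ‖F' x - F' xs‖ * (‖e‖ * ‖e‖) := by
        calc ⟪(F' xs) e - (F' x) e, e⟫ ≤ ‖(F' xs) e - (F' x) e‖ * ‖e‖ := real_inner_le_norm _ _
          _ = ‖(F' xs - F' x) e‖ * ‖e‖ := by rw [ContinuousLinearMap.sub_apply]
          _ ≤ (‖F' xs - F' x‖ * ‖e‖) * ‖e‖ := by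
              apply mul_le_mul_of_nonneg_right _ (norm_nonneg e)
              exact (F' xs - F' x).le_opNorm e
          _ = ‖F' x - F' xs‖ * (‖e‖ * ‖e‖) := by rw [norm_sub_rev]; ring
      linarith
    -- bound on ‖F' x - F' xs‖
    have hD : ‖Ginv‖ * ‖F' x - F' xs‖ ≤ f' t + 1 := by
      have := hmaj 0 ⟨le_refl 0, zero_le_one⟩ x hxball
      simp only [zero_smul, add_zero, zero_mul, hf'0] at this
      rw [← htdef] at this
      linarith
    -- bound on the remainder via the integral
    have hmapsTo : ∀ τ ∈ Set.Icc (0:ℝ) 1, τ * t ∈ Set.Ico (0:ℝ) R := by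
      intro τ hτ
      constructor
      · exact mul_nonneg hτ.1 ht0'
      · calc τ * t ≤ 1 * t := mul_le_mul_of_nonneg_right hτ.2 ht0'
          _ = t := one_mul t
          _ < R := htR
    have hbc : ContinuousOn (fun τ : ℝ => f' t - f' (τ * t)) (Set.Icc 0 1) := by
      apply ContinuousOn.sub continuousOn_const
      exact hcontf'.comp ((continuous_id.mul continuous_const).continuousOn) hmapsTo
    have hseg : ∀ τ ∈ Set.Icc (0:ℝ) 1, xs + τ • (x - xs) ∈ Ω := by
      intro τ hτ
      apply hballκ
      rw [Metric.mem_ball, dist_eq_norm]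
      have : ‖xs + τ • (x - xs) - xs‖ = τ * t := by
        rw [htdef]
        simp [norm_smul, abs_of_nonneg hτ.1]
      rw [this]
      calc τ * t ≤ 1 * t := mul_le_mul_of_nonneg_right hτ.2 ht0'
        _ = t := one_mul t
        _ < κ := htκ
    have hbound : ∀ τ ∈ Set.Icc (0:ℝ) 1,
        ‖Ginv‖ * ‖F' x - F' (xs + τ • (x - xs))‖ ≤ f' t - f' (τ * t) := by
      intro τ hτ
      have := hmaj τ hτ x hxball
      rw [← htdef] at this
      exact this
    have hremb := rem_bound Ω F F' hFd hF'c xs x hseg ‖Ginv‖ (norm_nonneg _)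
      (fun τ => f' t - f' (τ * t)) hbc hbound
    -- compute the integral
    have hival : (∫ τ in (0:ℝ)..1, (f' t - f' (τ * t)) * ‖x - xs‖) = t * f' t - f t := by
      rw [← htdef]
      rcases eq_or_lt_of_le ht0' with heq | hpos
      · rw [← heq]; simp [hf0]
      · have hi1 : (∫ τ in (0:ℝ)..1, (f' t - f' (τ * t)) * t)
            = (∫ τ in (0:ℝ)..1, (f' t - f' (τ * t))) * t :=
          intervalIntegral.integral_mul_const t _
        have hint2 : IntervalIntegrable (fun τ : ℝ => f' (τ * t)) MeasureTheory.volume 0 1 := by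
          apply ContinuousOn.intervalIntegrable
          rw [uIcc_of_le (zero_le_one)]
          exact hcontf'.comp ((continuous_id.mul continuous_const).continuousOn) hmapsTo
        have hi2 : (∫ τ in (0:ℝ)..1, (f' t - f' (τ * t)))
            = f' t - ∫ τ in (0:ℝ)..1, f' (τ * t) := by
          rw [intervalIntegral.integral_sub intervalIntegrable_const hint2]
          simp
        have hi3 : (∫ τ in (0:ℝ)..1, f' (τ * t)) = t⁻¹ * (f t) := by
          have hcomm : (∫ τ in (0:ℝ)..1, f' (τ * t)) = ∫ τ in (0:ℝ)..1, f' (t * τ) := by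
            congr 1; ext τ; rw [mul_comm]
          rw [hcomm, intervalIntegral.integral_comp_mul_left (fun s => f' s) (ne_of_gt hpos)]
          rw [mul_zero, mul_one, smul_eq_mul]
          rw [my_ftc hfd1 hfd2 (le_refl 0) ht0' htR, hf0, sub_zero]
        rw [hi1, hi2, hi3]
        field_simp
    rw [← hRemdef] at hremb
    rw [hival] at hremb
    -- put everything together
    rw [pow_two] at hcoer
    rcases eq_or_lt_of_le (norm_nonneg e) with heq | hepos
    · rw [← heq, zero_mul]
      exact hhtnn
    · have hGc : ‖Ginv‖ * ⟪(F' xs) e, e⟫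
          ≤ ‖Ginv‖ * (‖Rem‖ * ‖e‖ + ‖F' x - F' xs‖ * (‖e‖ * ‖e‖)) :=
        mul_le_mul_of_nonneg_left hchain (norm_nonneg _)
      have hGc2 : ‖Ginv‖ * (‖Rem‖ * ‖e‖ + ‖F' x - F' xs‖ * (‖e‖ * ‖e‖))
          = (‖Ginv‖ * ‖Rem‖) * ‖e‖ + (‖Ginv‖ * ‖F' x - F' xs‖) * (‖e‖ * ‖e‖) := by ring
      rw [hGc2] at hGc
      have hb1 : (‖Ginv‖ * ‖Rem‖) * ‖e‖ ≤ (t * f' t - f t) * ‖e‖ :=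
        mul_le_mul_of_nonneg_right hremb (norm_nonneg e)
      have hb2 : (‖Ginv‖ * ‖F' x - F' xs‖) * (‖e‖ * ‖e‖) ≤ (f' t + 1) * (‖e‖ * ‖e‖) :=
        mul_le_mul_of_nonneg_right hD (mul_nonneg (norm_nonneg e) (norm_nonneg e))
      have key : ‖e‖ * ‖e‖ ≤ (t * f' t - f t) * ‖e‖ + (f' t + 1) * (‖e‖ * ‖e‖) := by
        linarith only [hcoer, hGc, hb1, hb2]
      nlinarith only [key, hepos, mul_pos hepos hepos]
  -- the contraction constant
  have hfnt0 : f' t0 < 0 := hf'neg t0 ht0pos.le ht0ν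
  set A : ℝ := t0 * f' t0 - f t0 with hA
  set B : ℝ := t0 * (-f' t0) with hB
  have hBpos : 0 < B := by rw [hB]; exact mul_pos ht0pos (by linarith)
  have hmub0 := my_mean_ub hfd1 hfd2 hfmono (le_refl (0:ℝ)) ht0pos.le ht0R
  rw [hf0] at hmub0
  have hAnn : 0 ≤ A := by rw [hA]; linarith [hmub0.2]
  set c : ℝ := A / B with hc
  have hc0 : 0 ≤ c := div_nonneg hAnn hBpos.le
  have hSne : {u : ℝ | u ∈ Set.Ioo (0 : ℝ) ν ∧ f u / (u * f' u) - 1 < 1}.Nonempty := by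
    by_contra hne
    rw [Set.not_nonempty_iff_eq_empty] at hne
    have : t0 < ρ := lt_of_lt_of_le ht0r hrρ
    rw [hρ, hne, Real.sSup_empty] at this
    linarith
  obtain ⟨s₁, hs₁S, hts₁⟩ := exists_lt_of_lt_csSup hSne (hρ ▸ (lt_of_lt_of_le ht0r hrρ))
  have hs₁0 : 0 < s₁ := hs₁S.1.1
  have hs₁ν : s₁ < ν := hs₁S.1.2
  have hs₁R : s₁ < R := lt_of_lt_of_le hs₁ν hνR
  have hfns₁ : f' s₁ < 0 := hf'neg s₁ hs₁0.le hs₁ν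
  have hc1 : c < 1 := by
    have hpsi := my_psi_mono hR hfd1 hfd2 hf0 hf'0 hfconv hfmono ht0pos hts₁.le hs₁R
      (fun u hu0 hus₁ => hf'neg u hu0 (lt_of_le_of_lt hus₁ hs₁ν))
    -- q(s₁) < 1
    have hq1 : s₁ * f' s₁ - f s₁ < s₁ * (-f' s₁) := by
      have h2 := hs₁S.2
      have hden : s₁ * f' s₁ < 0 := mul_neg_of_pos_of_neg hs₁0 hfns₁
      rw [sub_lt_iff_lt_add] at h2
      rw [div_lt_iff_of_neg hden] at h2
      nlinarith [h2]
    have hs₁pos : 0 < s₁ * (-f' s₁) := mul_pos hs₁0 (by linarith)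
    rw [hc, div_lt_one hBpos]
    -- A * (s₁ * (-f' s₁)) ≤ (s₁ f' s₁ - f s₁) * B < (s₁ * (-f' s₁)) * B
    nlinarith [hpsi, hq1, hBpos, hs₁pos]
  have hcontract : ∀ s : ℝ, 0 ≤ s → s ≤ t0 → s * f' s - f s ≤ c * (s * (-f' s)) := by
    intro s hs0 hst0
    rcases eq_or_lt_of_le hs0 with heq | hspos
    · rw [← heq]; simp [hf0]
    · have hpsi := my_psi_mono hR hfd1 hfd2 hf0 hf'0 hfconv hfmono hspos hst0 ht0R
        (fun u hu0 hut0 => hf'neg u hu0 (lt_of_le_of_lt hut0 ht0ν))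
      rw [hc, div_mul_eq_mul_div, le_div_iff₀ hBpos]
      calc (s * f' s - f s) * B = (s * f' s - f s) * (t0 * (-f' t0)) := by rw [hB]
        _ ≤ (t0 * f' t0 - f t0) * (s * (-f' s)) := hpsi
        _ = A * (s * (-f' s)) := by rw [hA]
  -- main induction
  have hind : ∀ k : ℕ, ‖xseq k - xs‖ ≤ c ^ k * t0 := by
    intro k
    induction k with
    | zero => simp [ht0]
    | succ k ih =>
      have hck1 : c ^ k ≤ 1 := pow_le_one₀ hc0 hc1.le
      have htk0 : ‖xseq k - xs‖ ≤ t0 := le_trans ih (by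
        have h := mul_le_mul_of_nonneg_right hck1 ht0pos.le
        rwa [one_mul] at h)
      have hkey := hstep (xseq k) (xseq (k + 1)) htk0 (hNewton k)
      set tk : ℝ := ‖xseq k - xs‖ with htk
      have htkν : tk < ν := lt_of_le_of_lt htk0 ht0ν
      have hfntk : f' tk < 0 := hf'neg tk (norm_nonneg _) htkν
      have hcon := hcontract tk (norm_nonneg _) htk0
      have h1 : ‖xseq (k + 1) - xs‖ * (-f' tk) ≤ (c * tk) * (-f' tk) := by
        calc ‖xseq (k + 1) - xs‖ * (-f' tk) ≤ tk * f' tk - f tk := hkey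
          _ ≤ c * (tk * (-f' tk)) := hcon
          _ = (c * tk) * (-f' tk) := by ring
      have h2 : ‖xseq (k + 1) - xs‖ ≤ c * tk :=
        le_of_mul_le_mul_right h1 (neg_pos.2 hfntk)
      calc ‖xseq (k + 1) - xs‖ ≤ c * tk := h2
        _ ≤ c * (c ^ k * t0) := mul_le_mul_of_nonneg_left ih hc0
        _ = c ^ (k + 1) * t0 := by ring
  constructor
  · intro k
    rw [Metric.mem_ball, dist_eq_norm]
    have hck1 : c ^ k ≤ 1 := pow_le_one₀ hc0 hc1.le
    calc ‖xseq k - xs‖ ≤ c ^ k * t0 := hind k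
      _ ≤ 1 * t0 := mul_le_mul_of_nonneg_right hck1 ht0pos.le
      _ = t0 := one_mul t0
      _ < r := ht0r
  · rw [tendsto_iff_norm_sub_tendsto_zero]
    apply squeeze_zero (fun k => norm_nonneg _) hind
    have := tendsto_pow_atTop_nhds_zero_of_lt_one hc0 hc1
    simpa using this.mul_const t0
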